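/- Let C be a unary covering of a finite nonempty set U and define cl_C(X) = ⋂{S : SL(S) = S and X ⊆ S} for X ⊆ U. Then cl_C satisfies: (CLF1) X ⊆ cl_C(X) for all X ⊆ U; (CLF2) if X ⊆ Y ⊆ U then cl_C(X) ⊆ cl_C(Y); (CLF3) cl_C(cl_C(X)) = cl_C(X) for all X ⊆ U. -/

import Mathlib

open Set

/-- A covering of a finite nonempty universe `α`: a family of nonempty subsets whose union is everything. -/
def IsCovering {α : Type*} (C : Set (Set α)) : Prop :=
  (∀ K ∈ C, K.Nonempty) ∧ ⋃₀ C = Set.univ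

/-- The second type of covering lower approximation. -/
def SL {α : Type*} (C : Set (Set α)) (X : Set α) : Set α :=
  ⋃₀ {K | K ∈ C ∧ K ⊆ X}

/-- The second type of covering upper approximation. -/
def SH {α : Type*} (C : Set (Set α)) (X : Set α) : Set α :=
  ⋃₀ {K | K ∈ C ∧ (K ∩ X).Nonempty}

/-- The minimal description of a point. -/
def Md {α : Type*} (C : Set (Set α)) (x : α) : Set (Set α) :=
  {K | K ∈ C ∧ x ∈ K ∧ ∀ S ∈ C, x ∈ S → S ⊆ K → S = K}

/-- A covering is unary if every point has exactly one element in its minimal description. -/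
def Unary {α : Type*} (C : Set (Set α)) : Prop :=
  ∀ x : α, ∃! K, K ∈ Md C x

/-- The neighborhood of a point. -/
def Nbhd {α : Type*} (C : Set (Set α)) (x : α) : Set α :=
  ⋂₀ {K | K ∈ C ∧ x ∈ K}

/-- The indiscernible neighborhood of a point. -/
def IndNbhd {α : Type*} (C : Set (Set α)) (x : α) : Set α :=
  ⋃₀ {K | K ∈ C ∧ x ∈ K}

/-- A member of the covering is reducible if it is a union of other members. -/
def Reducible {α : Type*} (C : Set (Set α)) (K : Set α) : Prop :=
  ∃ D ⊆ C \ {K}, K = ⋃₀ D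

/-- The reduct of a covering: its irreducible members. -/
def reduct {α : Type*} (C : Set (Set α)) : Set (Set α) :=
  {K | K ∈ C ∧ ¬ Reducible C K}

/-- The closure operator induced by the fixed point family of `SL`. -/
def clC {α : Type*} (C : Set (Set α)) (X : Set α) : Set α :=
  ⋂₀ {S | SL C S = S ∧ X ⊆ S}

theorem stmt_1 {α : Type*} [Fintype α] [Nonempty α] (C : Set (Set α))
    (hC : IsCovering C) (hU : Unary C) :
    (∀ X : Set α, X ⊆ clC C X) ∧
    (∀ X Y : Set α, X ⊆ Y → clC C X ⊆ clC C Y) ∧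
    (∀ X : Set α, clC C (clC C X) = clC C X) := by
  -- existence of a minimal element of Md x below any L ∈ C containing x
  have hmin : ∀ (x : α) (L : Set α), L ∈ C → x ∈ L → ∃ K ∈ Md C x, K ⊆ L := by
    intro x L hL hxL
    have hfin : ({K | K ∈ C ∧ x ∈ K ∧ K ⊆ L} : Set (Set α)).Finite :=
      Set.toFinite _
    obtain ⟨M, hM, hMmin⟩ : ∃ M ∈ ({K | K ∈ C ∧ x ∈ K ∧ K ⊆ L} : Set (Set α)),
        ∀ S ∈ ({K | K ∈ C ∧ x ∈ K ∧ K ⊆ L} : Set (Set α)), S ⊆ M → M = S := by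
      obtain ⟨M, hM⟩ := Set.Finite.exists_minimal hfin ⟨L, hL, hxL, subset_rfl⟩
      exact ⟨M, hM.1, fun S hS hSM => subset_antisymm (hM.2 hS hSM) hSM⟩
    refine ⟨M, ⟨hM.1, hM.2.1, ?_⟩, hM.2.2⟩
    intro S hS hxS hSM
    exact (hMmin S ⟨hS, hxS, hSM.trans hM.2.2⟩ hSM).symm
  -- clC X is a fixed point of SL
  have hfix : ∀ X : Set α, SL C (clC C X) = clC C X := by
    intro X
    apply Set.Subset.antisymm
    · intro y hy
      obtain ⟨K, ⟨hKC, hKX⟩, hyK⟩ := hy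
      exact hKX hyK
    · intro x hx
      obtain ⟨K, hKMd, hKuniq⟩ := hU x
      refine ⟨K, ⟨hKMd.1, ?_⟩, hKMd.2.1⟩
      intro y hyK
      intro S hS
      have hxS : x ∈ S := hx S hS
      rw [← hS.1] at hxS
      obtain ⟨L, ⟨hLC, hLS⟩, hxL⟩ := hxS
      obtain ⟨K', hK', hK'L⟩ := hmin x L hLC hxL
      have : K' = K := hKuniq K' hK'
      exact hLS (hK'L (this ▸ hyK))
  have h1 : ∀ X : Set α, X ⊆ clC C X := by
    intro X x hx S hS
    exact hS.2 hx
  refine ⟨h1, ?_, ?_⟩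
  · intro X Y hXY x hx S hS
    exact hx S ⟨hS.1, hXY.trans hS.2⟩
  · intro X
    apply Set.Subset.antisymm
    · intro x hx
      exact hx (clC C X) ⟨hfix X, subset_rfl⟩
    · exact h1 _
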